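/- In any fair-division instance with additive market valuation v over m goods and n agents, let M_k (for k = 1,…,⌈m/n⌉) denote the k-th block of n goods in decreasing order of market value. If an allocation A satisfies the cardinality constraints |A_i ∩ M_k| ≤ 1 for all agents i and all blocks k, then for every pair of agents i,j and every good g* there is a good g ∈ A_j such that the number of goods in A_i with market value at least v(g*) is at least the number of goods in A_j \ {g} with market value at least v(g*); in particular A is EF1 with respect to v. -/

import Mathlib

open Finset

/-- Stochastic dominance at every threshold implies sum dominance. -/
private lemma sum_dom {α : Type*} [DecidableEq α] (v : α → ℝ) (hv : ∀ g, 0 ≤ v g) :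
    ∀ B C : Finset α,
      (∀ b ∈ B, (B.filter (fun x => v b ≤ v x)).card ≤ (C.filter (fun x => v b ≤ v x)).card) →
      ∑ x ∈ B, v x ≤ ∑ x ∈ C, v x := by
  intro B
  induction B using Finset.strongInduction with
  | _ B ih =>
    intro C h
    rcases B.eq_empty_or_nonempty with rfl | hB
    · simpa using Finset.sum_nonneg fun x _ => hv x
    · obtain ⟨b0, hb0B, hb0max⟩ := Finset.exists_max_image B v hB
      have h1 : 1 ≤ (C.filter (fun x => v b0 ≤ v x)).card := by
        refine le_trans ?_ (h b0 hb0B)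
        exact Finset.card_pos.mpr ⟨b0, Finset.mem_filter.mpr ⟨hb0B, le_refl _⟩⟩
      obtain ⟨c0, hc0⟩ := Finset.card_pos.mp (lt_of_lt_of_le one_pos h1)
      rw [Finset.mem_filter] at hc0
      have key : ∀ b ∈ B.erase b0,
          ((B.erase b0).filter (fun x => v b ≤ v x)).card ≤
          ((C.erase c0).filter (fun x => v b ≤ v x)).card := by
        intro b hb
        have hbB := Finset.mem_of_mem_erase hb
        have hmem1 : b0 ∈ B.filter (fun x => v b ≤ v x) :=
          Finset.mem_filter.mpr ⟨hb0B, hb0max b hbB⟩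
        have hmem2 : c0 ∈ C.filter (fun x => v b ≤ v x) :=
          Finset.mem_filter.mpr ⟨hc0.1, le_trans (hb0max b hbB) hc0.2⟩
        rw [Finset.filter_erase, Finset.filter_erase,
          Finset.card_erase_of_mem hmem1, Finset.card_erase_of_mem hmem2]
        exact Nat.sub_le_sub_right (h b hbB) 1
      have hrec := ih (B.erase b0) (Finset.erase_ssubset hb0B) (C.erase c0) key
      calc ∑ x ∈ B, v x = v b0 + ∑ x ∈ B.erase b0, v x := (Finset.add_sum_erase B v hb0B).symm
        _ ≤ v c0 + ∑ x ∈ C.erase c0, v x := add_le_add hc0.2 hrec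
        _ = ∑ x ∈ C, v x := Finset.add_sum_erase C v hc0.1

private lemma prefix_card {m : ℕ} {M : Type*} [Fintype M] [DecidableEq M] (π : M ≃ Fin m)
    {r : ℕ} (hr : r ≤ m) :
    (univ.filter (fun x : M => (π x : ℕ) < r)).card = r := by
  have key : (univ.filter (fun x : M => (π x : ℕ) < r)).card = (Finset.range r).card := by
    apply Finset.card_nbij (fun x => ((π x : Fin m) : ℕ))
    · intro x hx
      simp only [coe_filter, Finset.mem_coe, mem_filter, mem_univ, true_and, Set.mem_setOf_eq] at hx
      exact Finset.mem_range.mpr hx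
    · intro a _ b _ hab
      exact π.injective (Fin.val_injective hab)
    · intro y hy
      simp only [coe_range, Set.mem_Iio] at hy
      refine ⟨π.symm ⟨y, lt_of_lt_of_le hy hr⟩, ?_, ?_⟩
      · simp [hy]
      · simp
  rw [key, Finset.card_range]

theorem stmt_18 {n m : ℕ} (hn : 0 < n) {M : Type*} [Fintype M] [DecidableEq M]
    (π : M ≃ Fin m) (v : M → ℝ) (hvnn : ∀ g, 0 ≤ v g)
    (hcons : ∀ g g' : M, (π g : ℕ) ≤ (π g' : ℕ) → v g' ≤ v g)
    (A : Fin n → Finset M) (hpart : ∀ g : M, ∃! i, g ∈ A i)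
    (hblock : ∀ i k, ((A i).filter (fun g => (π g : ℕ) / n = k)).card ≤ 1) :
    ∀ i j, A j = ∅ ∨
      ((∀ gstar : M, ∃ g ∈ A j,
          (((A j).erase g).filter (fun x => v gstar ≤ v x)).card ≤
            ((A i).filter (fun x => v gstar ≤ v x)).card) ∧
        ∃ g ∈ A j, (∑ x ∈ (A j).erase g, v x) ≤ ∑ x ∈ A i, v x) := by
  have hm : Fintype.card M = m := by
    rw [Fintype.card_congr π, Fintype.card_fin]
  -- characterization of the blocks
  have hdiv : ∀ (a k : ℕ), a / n = k ↔ (k * n ≤ a ∧ a < k * n + n) := by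
    intro a k
    constructor
    · rintro rfl
      constructor
      · exact Nat.div_mul_le_self a n
      · have : a / n < a / n + 1 := Nat.lt_succ_self _
        have := (Nat.div_lt_iff_lt_mul hn).mp this
        calc a < (a / n + 1) * n := this
          _ = a / n * n + n := by ring
    · rintro ⟨h1, h2⟩
      exact Nat.div_eq_of_lt_le h1 (by linarith [h2])
  -- block k (as subset of all goods) for a full block has exactly n elements
  have hblockcard : ∀ k : ℕ, k * n + n ≤ m →
      (univ.filter (fun g : M => (π g : ℕ) / n = k)).card = n := by
    intro k hk
    have hsplit : univ.filter (fun g : M => (π g : ℕ) < k * n + n) =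
        univ.filter (fun g : M => (π g : ℕ) < k * n) ∪
          univ.filter (fun g : M => (π g : ℕ) / n = k) := by
      ext g
      simp only [mem_filter, mem_univ, true_and, mem_union, hdiv]
      omega
    have hdisj : Disjoint (univ.filter (fun g : M => (π g : ℕ) < k * n))
        (univ.filter (fun g : M => (π g : ℕ) / n = k)) := by
      rw [Finset.disjoint_left]
      intro g hg hg'
      simp only [mem_filter, mem_univ, true_and, hdiv] at hg hg'
      omega
    have hc1 := prefix_card π (le_trans (Nat.le_add_right _ _) hk)
    have hc2 := prefix_card π hk
    have := Finset.card_union_of_disjoint hdisj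
    rw [← hsplit] at this
    omega
  -- the allocation partitions the goods: pairwise disjoint
  have hdisjA : ∀ i j : Fin n, i ≠ j → Disjoint (A i) (A j) := by
    intro i j hij
    rw [Finset.disjoint_left]
    intro g hgi hgj
    obtain ⟨w, _, hw⟩ := hpart g
    exact hij ((hw i hgi).trans (hw j hgj).symm)
  -- summing the filters over agents gives the global filter
  have hsum : ∀ (p : M → Prop) [DecidablePred p],
      (univ.filter p).card = ∑ i : Fin n, ((A i).filter p).card := by
    intro p _
    have hcover : univ.filter p = univ.biUnion (fun i : Fin n => (A i).filter p) := by
      ext g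
      simp only [mem_filter, mem_univ, true_and, mem_biUnion]
      constructor
      · intro hp
        obtain ⟨i', hi', _⟩ := hpart g
        exact ⟨i', hi', hp⟩
      · rintro ⟨i', _, hp⟩
        exact hp
    rw [hcover]
    exact Finset.card_biUnion fun i _ j _ hij =>
      Finset.disjoint_filter_filter (hdisjA i j hij)
  -- each agent gets exactly one good from each full block
  have hone : ∀ (i : Fin n) (k : ℕ), k * n + n ≤ m →
      ((A i).filter (fun g => (π g : ℕ) / n = k)).card = 1 := by
    intro i k hk
    by_contra hne
    have hi0 : ((A i).filter (fun g => (π g : ℕ) / n = k)).card = 0 := by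
      have := hblock i k
      omega
    have hlt : ∑ i' : Fin n, ((A i').filter (fun g => (π g : ℕ) / n = k)).card <
        ∑ _i' : Fin n, 1 := by
      apply Finset.sum_lt_sum
      · intro i' _
        exact hblock i' k
      · exact ⟨i, mem_univ i, by rw [hi0]; exact one_pos⟩
    rw [← hsum, hblockcard k hk] at hlt
    simp at hlt
  -- lower bound: each agent has at least ⌊t/n⌋ goods of rank < t
  have hlow : ∀ (i : Fin n) (t : ℕ), t ≤ m →
      t / n ≤ ((A i).filter (fun g => (π g : ℕ) < t)).card := by
    intro i t ht
    have hsub : (Finset.range (t / n)).biUnion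
        (fun k => (A i).filter (fun g => (π g : ℕ) / n = k)) ⊆
        (A i).filter (fun g => (π g : ℕ) < t) := by
      intro g hg
      simp only [mem_biUnion, mem_range, mem_filter] at hg ⊢
      obtain ⟨k, hk, hgA, hgk⟩ := hg
      rw [hdiv] at hgk
      refine ⟨hgA, ?_⟩
      have h1 : k * n + n ≤ (t / n) * n := by
        have : k + 1 ≤ t / n := hk
        calc k * n + n = (k + 1) * n := by ring
          _ ≤ (t / n) * n := Nat.mul_le_mul_right n this
      have h2 : (t / n) * n ≤ t := Nat.div_mul_le_self t n
      omega
    have hcard : ((Finset.range (t / n)).biUnion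
        (fun k => (A i).filter (fun g => (π g : ℕ) / n = k))).card = t / n := by
      rw [Finset.card_biUnion]
      · rw [Finset.sum_congr rfl (fun k hk => ?_), Finset.sum_const, smul_eq_mul, mul_one,
          Finset.card_range]
        apply hone
        have hk' : k + 1 ≤ t / n := Finset.mem_range.mp hk
        calc k * n + n = (k + 1) * n := by ring
          _ ≤ (t / n) * n := Nat.mul_le_mul_right n hk'
          _ ≤ t := Nat.div_mul_le_self t n
          _ ≤ m := ht
      · intro k _ k' _ hkk'
        rw [Function.onFun, Finset.disjoint_left]
        intro g hg hg'
        simp only [mem_filter] at hg hg'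
        exact hkk' (hg.2.symm.trans hg'.2)
    calc t / n = _ := hcard.symm
      _ ≤ _ := Finset.card_le_card hsub
  -- upper bound: each agent has at most ⌊t/n⌋ + 1 goods of rank < t
  have hup : ∀ (j : Fin n) (t : ℕ),
      ((A j).filter (fun g => (π g : ℕ) < t)).card ≤ t / n + 1 := by
    intro j t
    have hsub : (A j).filter (fun g => (π g : ℕ) < t) ⊆
        (Finset.range (t / n + 1)).biUnion
          (fun k => (A j).filter (fun g => (π g : ℕ) / n = k)) := by
      intro g hg
      simp only [mem_filter, mem_biUnion, mem_range] at hg ⊢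
      exact ⟨(π g : ℕ) / n, Nat.lt_succ_of_le (Nat.div_le_div_right (le_of_lt hg.2)),
        hg.1, rfl⟩
    calc ((A j).filter (fun g => (π g : ℕ) < t)).card
        ≤ _ := Finset.card_le_card hsub
      _ ≤ ∑ k ∈ Finset.range (t / n + 1),
            ((A j).filter (fun g => (π g : ℕ) / n = k)).card := Finset.card_biUnion_le
      _ ≤ ∑ _k ∈ Finset.range (t / n + 1), 1 :=
          Finset.sum_le_sum fun k _ => hblock j k
      _ = t / n + 1 := by simp
  intro i j
  rcases (A j).eq_empty_or_nonempty with hAj | hAj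
  · exact Or.inl hAj
  right
  obtain ⟨gtop, hgtopA, hgtopmin⟩ :=
    Finset.exists_min_image (A j) (fun g => (π g : ℕ)) hAj
  -- the core counting claim with the uniform good gtop
  have core : ∀ gstar : M,
      (((A j).erase gtop).filter (fun x => v gstar ≤ v x)).card ≤
        ((A i).filter (fun x => v gstar ≤ v x)).card := by
    intro gstar
    set t := (univ.filter (fun x : M => v gstar ≤ v x)).card with ht
    have htm : t ≤ m := by
      rw [ht, ← hm, ← Finset.card_univ]
      exact Finset.card_le_card (Finset.filter_subset _ _)
    -- the threshold set is a rank prefix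
    have hpe : ∀ g : M, v gstar ≤ v g ↔ (π g : ℕ) < t := by
      intro g
      constructor
      · intro hg
        by_contra hlt
        push_neg at hlt
        have hsub : univ.filter (fun x : M => (π x : ℕ) ≤ (π g : ℕ)) ⊆
            univ.filter (fun x : M => v gstar ≤ v x) := by
          intro x hx
          simp only [mem_filter, mem_univ, true_and] at hx ⊢
          exact le_trans hg (hcons x g hx)
        have hcard : (univ.filter (fun x : M => (π x : ℕ) ≤ (π g : ℕ))).card
            = (π g : ℕ) + 1 := by
          have heq : univ.filter (fun x : M => (π x : ℕ) ≤ (π g : ℕ)) =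
              univ.filter (fun x : M => (π x : ℕ) < (π g : ℕ) + 1) := by
            apply Finset.filter_congr
            intro x _
            simp [Nat.lt_succ_iff]
          rw [heq]
          exact prefix_card π (π g).isLt
        have := Finset.card_le_card hsub
        rw [hcard, ← ht] at this
        omega
      · intro hlt
        by_contra hg
        push_neg at hg
        have hsub : univ.filter (fun x : M => v gstar ≤ v x) ⊆
            univ.filter (fun x : M => (π x : ℕ) < (π g : ℕ)) := by
          intro x hx
          simp only [mem_filter, mem_univ, true_and] at hx ⊢
          by_contra hge
          push_neg at hge
          exact absurd (le_trans hx (hcons g x hge)) (not_le.mpr hg)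
        have hcard := prefix_card π (le_of_lt (π g).isLt)
        have := Finset.card_le_card hsub
        rw [hcard, ← ht] at this
        omega
    have hfilt : ∀ (T : Finset M),
        T.filter (fun x => v gstar ≤ v x) = T.filter (fun g => (π g : ℕ) < t) :=
      fun T => Finset.filter_congr fun x _ => by simp [hpe x]
    rw [hfilt, hfilt]
    rcases ((A j).filter (fun g => (π g : ℕ) < t)).eq_empty_or_nonempty with he | hne
    · have : ((A j).erase gtop).filter (fun g => (π g : ℕ) < t) ⊆
          (A j).filter (fun g => (π g : ℕ) < t) :=
        Finset.filter_subset_filter _ (Finset.erase_subset _ _)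
      rw [he] at this
      simp [Finset.subset_empty.mp this]
    · obtain ⟨b, hb⟩ := hne
      rw [Finset.mem_filter] at hb
      have hgtopmem : gtop ∈ (A j).filter (fun g => (π g : ℕ) < t) :=
        Finset.mem_filter.mpr ⟨hgtopA, lt_of_le_of_lt (hgtopmin b hb.1) hb.2⟩
      rw [Finset.filter_erase, Finset.card_erase_of_mem hgtopmem]
      have h1 := hup j t
      have h2 := hlow i t htm
      omega
  refine ⟨fun gstar => ⟨gtop, hgtopA, core gstar⟩, gtop, hgtopA, ?_⟩
  apply sum_dom v hvnn
  intro b hb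
  calc (((A j).erase gtop).filter (fun x => v b ≤ v x)).card
      ≤ ((A i).filter (fun x => v b ≤ v x)).card := core b
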